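/- Let f be a bounded affine permutation of type (k,N) and let i ∈ ℤ satisfy i+1 ≤ f(i+1) < f(i) ≤ i+N. Then Imin_{i+1}(f∘s_i) = (Imin_{i+1}(f) ∖ {f(i) mod N}) ∪ {f(i+1) mod N}. -/

import Mathlib

/-- The affine simple reflection `s_i` of period `N`: `j ↦ j+1` if `j ≡ i (mod N)`,
`j ↦ j−1` if `j ≡ i+1 (mod N)`, and `j ↦ j` otherwise. -/
def sRefl (N : ℕ) (i : ℤ) : ℤ → ℤ := fun j =>
  if (j - i) % (N : ℤ) = 0 then j + 1
  else if (j - (i + 1)) % (N : ℤ) = 0 then j - 1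
  else j

/-- `Imin_i(f) = { f j mod N : j < i and f j ≥ i } ⊆ ℤ/Nℤ`. -/
def Imin (N : ℕ) (f : ℤ → ℤ) (i : ℤ) : Set (ZMod N) :=
  {x | ∃ j : ℤ, j < i ∧ i ≤ f j ∧ x = ((f j : ℤ) : ZMod N)}

/-- For a bounded affine permutation `f` of type `(k,N)` with
`i+1 ≤ f(i+1) < f(i) ≤ i+N`, one has
`Imin_{i+1}(f∘s_i) = (Imin_{i+1}(f) ∖ {f i mod N}) ∪ {f (i+1) mod N}`. -/
theorem stmt17 (k N : ℕ) (hN : 1 ≤ N) (hkN : k ≤ N) (f : ℤ → ℤ)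
    (hbij : Function.Bijective f)
    (hper : ∀ j : ℤ, f (j + (N : ℤ)) = f j + (N : ℤ))
    (hbound : ∀ j : ℤ, j ≤ f j ∧ f j ≤ j + (N : ℤ))
    (hsum : ∑ j ∈ Finset.Icc (1 : ℤ) (N : ℤ), (f j - j) = (k : ℤ) * (N : ℤ))
    (i : ℤ)
    (h1 : i + 1 ≤ f (i + 1)) (h2 : f (i + 1) < f i) (h3 : f i ≤ i + (N : ℤ)) :
    Imin N (f ∘ sRefl N i) (i + 1) =
      (Imin N f (i + 1) \ {((f i : ℤ) : ZMod N)}) ∪ {((f (i + 1) : ℤ) : ZMod N)} := by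
  have hNpos : (0:ℤ) < (N:ℤ) := by exact_mod_cast hN
  have hN2 : (2:ℤ) ≤ (N:ℤ) := by linarith
  -- periodicity for arbitrary multiples
  have hper' : ∀ (j m : ℤ), f (j + m * N) = f j + m * N := by
    intro j m
    induction m using Int.induction_on with
    | zero => simp
    | succ n ih =>
        have h := hper (j + (n:ℤ) * N)
        have e : j + ((n:ℤ)+1) * N = j + (n:ℤ)*N + N := by ring
        rw [e, h, ih]; ring
    | pred n ih =>
        have h := hper (j + (-(n:ℤ)-1) * N)
        have e : j + (-(n:ℤ)-1) * N + N = j + (-(n:ℤ)) * N := by ring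
        rw [e] at h
        have e2 : f (j + (-(n:ℤ)-1) * N) = f (j + (-(n:ℤ))*N) - N := by omega
        rw [e2, ih]; ring
  have hmod : ∀ a b : ℤ, (a - b) % (N:ℤ) = 0 → ∃ m : ℤ, a = b + m * N := by
    intro a b h
    obtain ⟨m, hm⟩ := Int.dvd_of_emod_eq_zero h
    exact ⟨m, by linarith⟩
  -- congruence of f-values forces congruence of arguments
  have hres : ∀ a b : ℤ, ((f a : ℤ) : ZMod N) = ((f b : ℤ) : ZMod N) →
      (a - b) % (N:ℤ) = 0 := by
    intro a b h
    rw [ZMod.intCast_eq_intCast_iff] at h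
    obtain ⟨m, hm⟩ := (Int.modEq_iff_dvd.mp h)
    have hfb : f b = f a + m * N := by linarith
    have : f b = f (a + m * N) := by rw [hper']; exact hfb
    have hb : b = a + m * N := hbij.injective this
    have : (N:ℤ) ∣ (a - b) := ⟨-m, by rw [hb]; ring⟩
    exact Int.emod_eq_zero_of_dvd this
  ext x
  simp only [Imin, Set.mem_setOf_eq, Set.mem_union, Set.mem_diff, Set.mem_singleton_iff,
    Function.comp_apply]
  constructor
  · rintro ⟨j, hj, hgj, hx⟩
    by_cases c1 : (j - i) % (N:ℤ) = 0
    · have hs : sRefl N i j = j + 1 := by simp [sRefl, c1]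
      rw [hs] at hgj hx
      obtain ⟨m, hm⟩ := hmod j i c1
      have hf : f (j + 1) = f (i+1) + m * N := by
        rw [hm, show i + m*N + 1 = (i+1) + m*N by ring, hper']
      have hm0 : m = 0 := by
        rcases lt_trichotomy m 0 with h | h | h
        · exfalso
          have hmn : m * N ≤ -N := by nlinarith
          linarith
        · exact h
        · exfalso
          have hmn : (N:ℤ) ≤ m * N := by nlinarith
          linarith
      right
      rw [hx, hf, hm0]; norm_num
    · by_cases c2 : (j - (i+1)) % (N:ℤ) = 0
      · exfalso
        have hs : sRefl N i j = j - 1 := by simp [sRefl, c1, c2]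
        rw [hs] at hgj
        obtain ⟨m, hm⟩ := hmod j (i+1) c2
        have hf : f (j - 1) = f i + m * N := by
          rw [hm, show i + 1 + m*N - 1 = i + m*N by ring, hper']
        have hmle : m ≤ -1 := by
          have : m * N ≤ -1 := by linarith
          rcases lt_or_ge m 0 with h | h
          · omega
          · exfalso; nlinarith
        nlinarith
      · have hs : sRefl N i j = j := by simp [sRefl, c1, c2]
        rw [hs] at hgj hx
        left
        refine ⟨⟨j, hj, hgj, hx⟩, ?_⟩
        intro hcon
        rw [hx] at hcon
        exact c1 (hres j i hcon)
  · rintro (⟨⟨j, hj, hfj, hx⟩, hne⟩ | hx)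
    · have c1 : (j - i) % (N:ℤ) ≠ 0 := by
        intro h
        obtain ⟨m, hm⟩ := hmod j i h
        apply hne
        rw [hx, hm, hper']
        push_cast
        simp
      have c2 : (j - (i+1)) % (N:ℤ) ≠ 0 := by
        intro h
        obtain ⟨m, hm⟩ := hmod j (i+1) h
        have hf : f j = f (i+1) + m * N := by rw [hm, hper']
        have hmle : m ≤ -1 := by
          have : m * N ≤ -1 := by linarith
          rcases lt_or_ge m 0 with h' | h'
          · omega
          · exfalso; nlinarith
        nlinarith
      have hs : sRefl N i j = j := by simp [sRefl, c1, c2]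
      exact ⟨j, hj, by rw [hs]; exact hfj, by rw [hs]; exact hx⟩
    · have hs : sRefl N i i = i + 1 := by simp [sRefl]
      exact ⟨i, by linarith, by rw [hs]; linarith, by rw [hs]; exact hx⟩
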